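/- arXiv:1304.8087 — 5 statements merged into one kernel-verified Lean document; each statement's English description precedes it below -/
import Mathlib

section
/- Sunflower counting lemma: Let T_1, T_2, …, T_q (q ≥ 2) be subsets of [R] forming a sunflower with core T*, i.e., T_i ∩ T_j ⊆ T* for all i ≠ j. If |T_1| + |T_2| + ⋯ + |T_q| ≥ R + (q−1)θ for some integer θ ≥ 0, then |T*| ≥ θ; moreover, if |T*| = θ, then T* ⊆ T_i for all 1 ≤ i ≤ q. -/
/-- **Sunflower counting lemma.** If `T 1, …, T q` (`q ≥ 2`) form a sunflower on `[R]`
with core `Tstar` and `∑ |T i| ≥ R + (q-1)·θ`, then `|Tstar| ≥ θ`; moreover if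
`|Tstar| = θ` then `Tstar ⊆ T i` for all `i`. -/
theorem sunflower_counting
    (R q θ : ℕ) (hq : 2 ≤ q)
    (T : Fin q → Finset (Fin R)) (Tstar : Finset (Fin R))
    (hsun : ∀ i j : Fin q, i ≠ j → T i ∩ T j ⊆ Tstar)
    (hcard : R + (q - 1) * θ ≤ ∑ i, (T i).card) :
    θ ≤ Tstar.card ∧ (Tstar.card = θ → ∀ i, Tstar ⊆ T i) := by
  classical
  set f : Fin R → ℕ := fun x => (Finset.univ.filter (fun i => x ∈ T i)).card with hf
  set g : Fin R → ℕ := fun x => if x ∈ Tstar then q else 1 with hg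
  have hswap : ∑ i, (T i).card = ∑ x : Fin R, f x := by
    have h1 : ∀ i, (T i).card = ∑ x : Fin R, if x ∈ T i then 1 else 0 := by
      intro i
      rw [← Finset.card_filter]
      simp
    have h2 : ∀ x, f x = ∑ i : Fin q, if x ∈ T i then 1 else 0 := by
      intro x
      show (Finset.univ.filter (fun i => x ∈ T i)).card = _
      rw [Finset.card_filter]
    simp only [h1, h2]
    exact Finset.sum_comm
  have hfg : ∀ x, f x ≤ g x := by
    intro x
    simp only [hg]
    split
    · calc f x ≤ Finset.univ.card := Finset.card_filter_le _ _
      _ = q := by simp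
    · rename_i hx
      by_contra h
      push_neg at h
      have h2 : 1 < f x := h
      obtain ⟨i, hi, j, hj, hij⟩ := Finset.one_lt_card.mp h2
      simp only [Finset.mem_filter] at hi hj
      exact hx (hsun i j hij (Finset.mem_inter.mpr ⟨hi.2, hj.2⟩))
  have hTstarR : Tstar.card ≤ R := by
    calc Tstar.card ≤ (Finset.univ : Finset (Fin R)).card := Finset.card_le_univ _
    _ = R := by simp
  have hgsum : ∑ x : Fin R, g x = R + (q - 1) * Tstar.card := by
    have he : ∀ x : Fin R, g x = 1 + (if x ∈ Tstar then q - 1 else 0) := by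
      intro x; simp only [hg]; split <;> omega
    rw [Finset.sum_congr rfl (fun x _ => he x), Finset.sum_add_distrib,
      Finset.sum_ite_mem, Finset.univ_inter, Finset.sum_const, Finset.sum_const,
      smul_eq_mul, smul_eq_mul, mul_one, mul_comm]
    simp
  have hmain : ∑ x : Fin R, f x ≤ R + (q - 1) * Tstar.card := by
    rw [← hgsum]; exact Finset.sum_le_sum (fun x _ => hfg x)
  have hkey : R + (q - 1) * θ ≤ R + (q - 1) * Tstar.card := by
    calc R + (q - 1) * θ ≤ ∑ i, (T i).card := hcard
    _ = ∑ x : Fin R, f x := hswap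
    _ ≤ _ := hmain
  have hθ : θ ≤ Tstar.card := by
    have h1 : (q - 1) * θ ≤ (q - 1) * Tstar.card := by omega
    exact Nat.le_of_mul_le_mul_left h1 (by omega)
  refine ⟨hθ, fun hc i => ?_⟩
  by_contra hsub
  obtain ⟨x, hxT, hxi⟩ := Finset.not_subset.mp hsub
  have hfx : f x < g x := by
    have hsub2 : Finset.univ.filter (fun j => x ∈ T j) ⊆ Finset.univ.erase i := by
      intro j hj
      simp only [Finset.mem_filter] at hj
      refine Finset.mem_erase.mpr ⟨?_, Finset.mem_univ _⟩
      rintro rfl; exact hxi hj.2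
    have : f x ≤ q - 1 := by
      calc f x ≤ (Finset.univ.erase i).card := Finset.card_le_card hsub2
      _ = q - 1 := by rw [Finset.card_erase_of_mem (Finset.mem_univ _)]; simp
    simp only [hg, if_pos hxT]
    omega
  have hlt : ∑ x : Fin R, f x < ∑ x : Fin R, g x :=
    Finset.sum_lt_sum (fun y _ => hfg y) ⟨x, Finset.mem_univ x, hfx⟩
  rw [hgsum, hc] at hlt
  omega
end

section
/- Singular value inequality for products: Let P be a p×m real matrix and Q an m×q real matrix, and let σ_j(·) denote the j-th largest singular value of a matrix. Then for all positive integers ℓ and i with ℓ ≤ min{p, q}, ℓ ≤ i ≤ min{m, q}, and ℓ + m − i ≤ min{p, m}, one has σ_ℓ(PQ) ≥ σ_{ℓ+m−i}(P) · σ_i(Q). -/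
/-- Euclidean norm of a finitely-indexed family of reals. -/
noncomputable def enorm {ι : Type*} [Fintype ι] (x : ι → ℝ) : ℝ :=
  Real.sqrt (∑ i, (x i) ^ 2)

/-- The `j`-th largest singular value of a real matrix (for `1 ≤ j ≤ min(p,m)`),
via the Courant–Fischer (max–min) characterization:
`σ_j(M) = max { s ≥ 0 | ∃ V of dimension j, ∀ x ∈ V, s‖x‖ ≤ ‖Mx‖ }`. -/
noncomputable def sval {p m : ℕ} (M : Matrix (Fin p) (Fin m) ℝ) (j : ℕ) : ℝ :=
  sSup {s : ℝ | 0 ≤ s ∧ ∃ V : Submodule ℝ (Fin m → ℝ), Module.finrank ℝ V = j ∧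
    ∀ x ∈ V, s * _root_.enorm x ≤ _root_.enorm (M.mulVec x)}

open Module

lemma enorm_nonneg' {ι : Type*} [Fintype ι] (x : ι → ℝ) : 0 ≤ _root_.enorm x :=
  Real.sqrt_nonneg _

lemma enorm_pos'' {ι : Type*} [Fintype ι] {x : ι → ℝ} (hx : x ≠ 0) : 0 < _root_.enorm x := by
  apply Real.sqrt_pos.2
  have hex : ∃ i, x i ≠ 0 := by
    by_contra h; push_neg at h; exact hx (funext h)
  obtain ⟨i, hi⟩ := hex
  have h0 : 0 < x i ^ 2 := by positivity
  exact lt_of_lt_of_le h0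
    (Finset.single_le_sum (f := fun j => x j ^ 2) (fun j _ => by positivity) (Finset.mem_univ i))

lemma enorm_mulVec_le {a b : ℕ} (M : Matrix (Fin a) (Fin b) ℝ) (x : Fin b → ℝ) :
    _root_.enorm (M.mulVec x) ≤ Real.sqrt (∑ r, ∑ c, (M r c) ^ 2) * _root_.enorm x := by
  unfold _root_.enorm
  rw [← Real.sqrt_mul (by positivity)]
  apply Real.sqrt_le_sqrt
  have h1 : ∀ r : Fin a, (M.mulVec x r) ^ 2 ≤ (∑ c, (M r c) ^ 2) * ∑ c, (x c) ^ 2 := by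
    intro r
    have := Finset.sum_mul_sq_le_sq_mul_sq Finset.univ (fun c => M r c) x
    simpa [Matrix.mulVec, dotProduct] using this
  calc ∑ r, (M.mulVec x r) ^ 2 ≤ ∑ r, (∑ c, (M r c) ^ 2) * ∑ c, (x c) ^ 2 :=
        Finset.sum_le_sum fun r _ => h1 r
    _ = (∑ r, ∑ c, (M r c) ^ 2) * ∑ c, (x c) ^ 2 := by rw [Finset.sum_mul]

/-- Any submodule contains submodules of every smaller finrank. -/
lemma exists_le_finrank_eq {E : Type*} [AddCommGroup E] [Module ℝ E]
    [FiniteDimensional ℝ E] (W : Submodule ℝ E) (j : ℕ) (hj : j ≤ finrank ℝ W) :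
    ∃ V : Submodule ℝ E, V ≤ W ∧ finrank ℝ V = j := by
  let b := finBasis ℝ W
  let s : Fin j → E := fun t => (b (Fin.castLE hj t) : E)
  have h1 : LinearIndependent ℝ (fun t : Fin (finrank ℝ W) => (b t : E)) :=
    b.linearIndependent.map' W.subtype (Submodule.ker_subtype W)
  have hli : LinearIndependent ℝ s := h1.comp (Fin.castLE hj) (Fin.castLE_injective hj)
  refine ⟨Submodule.span ℝ (Set.range s), ?_, ?_⟩
  · rw [Submodule.span_le]
    rintro _ ⟨t, rfl⟩
    exact (b (Fin.castLE hj t)).2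
  · rw [finrank_span_eq_card hli, Fintype.card_fin]

lemma zero_mem_svalSet {a b : ℕ} (M : Matrix (Fin a) (Fin b) ℝ) {j : ℕ} (hj : j ≤ b) :
    (0 : ℝ) ∈ {s : ℝ | 0 ≤ s ∧ ∃ V : Submodule ℝ (Fin b → ℝ), Module.finrank ℝ V = j ∧
      ∀ x ∈ V, s * _root_.enorm x ≤ _root_.enorm (M.mulVec x)} := by
  obtain ⟨V, -, hV⟩ := exists_le_finrank_eq (⊤ : Submodule ℝ (Fin b → ℝ)) j
    (by rw [finrank_top, Module.finrank_fin_fun]; exact hj)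
  exact ⟨le_refl 0, V, hV, fun x _ => by simpa using enorm_nonneg' (M.mulVec x)⟩

lemma svalSet_bddAbove {a b : ℕ} (M : Matrix (Fin a) (Fin b) ℝ) {j : ℕ} (hj : 1 ≤ j) :
    BddAbove {s : ℝ | 0 ≤ s ∧ ∃ V : Submodule ℝ (Fin b → ℝ), Module.finrank ℝ V = j ∧
      ∀ x ∈ V, s * _root_.enorm x ≤ _root_.enorm (M.mulVec x)} := by
  refine ⟨Real.sqrt (∑ r, ∑ c, (M r c) ^ 2), ?_⟩
  rintro s ⟨hs, V, hV, hle⟩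
  have hVne : V ≠ ⊥ := by
    intro h
    rw [h, finrank_bot] at hV
    omega
  obtain ⟨x, hxV, hx0⟩ := Submodule.exists_mem_ne_zero_of_ne_bot hVne
  have hx : 0 < _root_.enorm x := enorm_pos'' hx0
  have := (hle x hxV).trans (enorm_mulVec_le M x)
  exact le_of_mul_le_mul_right this hx

lemma prod_mem_svalSet {p m q : ℕ} (P : Matrix (Fin p) (Fin m) ℝ)
    (Q : Matrix (Fin m) (Fin q) ℝ) {sP sQ : ℝ} {k i ℓ : ℕ} (hk : k + i = ℓ + m)
    (hP : sP ∈ {s : ℝ | 0 ≤ s ∧ ∃ V : Submodule ℝ (Fin m → ℝ), Module.finrank ℝ V = k ∧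
      ∀ x ∈ V, s * _root_.enorm x ≤ _root_.enorm (P.mulVec x)})
    (hQ : sQ ∈ {s : ℝ | 0 ≤ s ∧ ∃ V : Submodule ℝ (Fin q → ℝ), Module.finrank ℝ V = i ∧
      ∀ x ∈ V, s * _root_.enorm x ≤ _root_.enorm (Q.mulVec x)}) :
    sP * sQ ∈ {s : ℝ | 0 ≤ s ∧ ∃ V : Submodule ℝ (Fin q → ℝ), Module.finrank ℝ V = ℓ ∧
      ∀ x ∈ V, s * _root_.enorm x ≤ _root_.enorm ((P * Q).mulVec x)} := by
  obtain ⟨hsP, VP, hVP, hPle⟩ := hP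
  obtain ⟨hsQ, VQ, hVQ, hQle⟩ := hQ
  set f := Q.mulVecLin with hf
  set U := VP.comap f with hU
  set g := VP.mkQ ∘ₗ f with hg
  have hker : LinearMap.ker g = U := by
    rw [hg, LinearMap.ker_comp, Submodule.ker_mkQ]
  have e1 : finrank ℝ (LinearMap.range g) + finrank ℝ U = q := by
    rw [← hker, LinearMap.finrank_range_add_finrank_ker, Module.finrank_fin_fun]
  have e2 : finrank ℝ ((Fin m → ℝ) ⧸ VP) + k = m := by
    rw [← hVP, Submodule.finrank_quotient_add_finrank, Module.finrank_fin_fun]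
  have e3 : finrank ℝ (LinearMap.range g) ≤ finrank ℝ ((Fin m → ℝ) ⧸ VP) :=
    Submodule.finrank_le _
  have e4 : finrank ℝ ↥(VQ ⊔ U) + finrank ℝ ↥(VQ ⊓ U) = finrank ℝ VQ + finrank ℝ U :=
    Submodule.finrank_sup_add_finrank_inf_eq VQ U
  have e5 : finrank ℝ ↥(VQ ⊔ U) ≤ q := by
    have := Submodule.finrank_le (VQ ⊔ U)
    rwa [Module.finrank_fin_fun] at this
  have hW : ℓ ≤ finrank ℝ ↥(VQ ⊓ U) := by omega
  obtain ⟨V, hVle, hVrank⟩ := exists_le_finrank_eq (VQ ⊓ U) ℓ hW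
  refine ⟨mul_nonneg hsP hsQ, V, hVrank, fun x hx => ?_⟩
  obtain ⟨hxQ, hxU⟩ := hVle hx
  have hfx : Q.mulVec x ∈ VP := by
    simpa [hU, hf] using hxU
  calc sP * sQ * _root_.enorm x = sP * (sQ * _root_.enorm x) := by ring
    _ ≤ sP * _root_.enorm (Q.mulVec x) := mul_le_mul_of_nonneg_left (hQle x hxQ) hsP
    _ ≤ _root_.enorm (P.mulVec (Q.mulVec x)) := hPle _ hfx
    _ = _root_.enorm ((P * Q).mulVec x) := by rw [Matrix.mulVec_mulVec]

/-- **Singular value inequality for products:** `σ_ℓ(PQ) ≥ σ_{ℓ+m-i}(P) · σ_i(Q)`. -/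
theorem sval_product
    (p m q : ℕ) (P : Matrix (Fin p) (Fin m) ℝ) (Q : Matrix (Fin m) (Fin q) ℝ)
    (ℓ i : ℕ) (hℓ1 : 1 ≤ ℓ) (hi1 : 1 ≤ i)
    (hℓ : ℓ ≤ min p q) (hiℓ : ℓ ≤ i) (hi : i ≤ min m q)
    (hsum : ℓ + m - i ≤ min p m) :
    sval P (ℓ + m - i) * sval Q i ≤ sval (P * Q) ℓ := by
  set k := ℓ + m - i with hkdef
  have him : i ≤ m := le_trans hi (min_le_left _ _)
  have hiq : i ≤ q := le_trans hi (min_le_right _ _)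
  have hℓq : ℓ ≤ q := le_trans hℓ (min_le_right _ _)
  have hkm : k ≤ m := le_trans hsum (min_le_right _ _)
  have hk : k + i = ℓ + m := by omega
  have hk1 : 1 ≤ k := by omega
  set SPQ := {s : ℝ | 0 ≤ s ∧ ∃ V : Submodule ℝ (Fin q → ℝ), Module.finrank ℝ V = ℓ ∧
      ∀ x ∈ V, s * _root_.enorm x ≤ _root_.enorm ((P * Q).mulVec x)} with hSPQ
  have hbdd : BddAbove SPQ := svalSet_bddAbove (P * Q) hℓ1
  have h0PQ : (0 : ℝ) ∈ SPQ := zero_mem_svalSet (P * Q) hℓq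
  set c := sval (P * Q) ℓ with hc
  have hc0 : (0 : ℝ) ≤ c := le_csSup hbdd h0PQ
  set SP := {s : ℝ | 0 ≤ s ∧ ∃ V : Submodule ℝ (Fin m → ℝ), Module.finrank ℝ V = k ∧
      ∀ x ∈ V, s * _root_.enorm x ≤ _root_.enorm (P.mulVec x)} with hSP
  set SQ := {s : ℝ | 0 ≤ s ∧ ∃ V : Submodule ℝ (Fin q → ℝ), Module.finrank ℝ V = i ∧
      ∀ x ∈ V, s * _root_.enorm x ≤ _root_.enorm (Q.mulVec x)} with hSQ
  have h0P : (0 : ℝ) ∈ SP := zero_mem_svalSet P hkm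
  have h0Q : (0 : ℝ) ∈ SQ := zero_mem_svalSet Q hiq
  have key : ∀ sP ∈ SP, ∀ sQ ∈ SQ, sP * sQ ≤ c :=
    fun sP hsP sQ hsQ => le_csSup hbdd (prod_mem_svalSet P Q hk hsP hsQ)
  have hbddQ : BddAbove SQ := svalSet_bddAbove Q hi1
  have hb0 : (0 : ℝ) ≤ sval Q i := le_csSup hbddQ h0Q
  have hab : ∀ sP ∈ SP, sP * sval Q i ≤ c := by
    intro sP hsP
    have hsP0 : 0 ≤ sP := hsP.1
    rcases hsP0.eq_or_lt with h | h
    · rw [← h, zero_mul]; exact hc0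
    · have hle : sval Q i ≤ c / sP := by
        apply csSup_le ⟨0, h0Q⟩
        intro sQ hsQ
        rw [le_div_iff₀ h, mul_comm]
        exact key sP hsP sQ hsQ
      calc sP * sval Q i ≤ sP * (c / sP) := mul_le_mul_of_nonneg_left hle h.le
        _ = c := mul_div_cancel₀ c h.ne'
  rcases hb0.eq_or_lt with h | h
  · rw [← h, mul_zero]; exact hc0
  · have hle : sval P k ≤ c / sval Q i := by
      apply csSup_le ⟨0, h0P⟩
      intro sP hsP
      rw [le_div_iff₀ h]
      exact hab sP hsP
    calc sval P k * sval Q i ≤ (c / sval Q i) * sval Q i :=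
        mul_le_mul_of_nonneg_right hle hb0
      _ = c := div_mul_cancel₀ c h.ne'
end

section
/- ℓ₁-normalization error lemma: Let ε > 0, λ ≥ 0, let v ∈ ℝⁿ be a vector with ‖v‖₁ ∈ [1 − ε/4, 1 + ε/4], and let u ∈ ℝⁿ be a probability vector (all entries nonnegative with Σ_i u_i = 1). If ‖v − λu‖₂ ≤ ε/(4√n), then 1 − ε/2 ≤ λ ≤ 1 + ε/2 and ‖v − u‖₂ ≤ ε. -/
/-- **ℓ₁-normalization error lemma.** -/
theorem l1_normalization_error
    (n : ℕ) (ε lam : ℝ) (hε : 0 < ε) (hlam : 0 ≤ lam)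
    (v u : Fin n → ℝ)
    (hv1 : 1 - ε / 4 ≤ ∑ i, |v i|) (hv2 : ∑ i, |v i| ≤ 1 + ε / 4)
    (hu0 : ∀ i, 0 ≤ u i) (hu1 : ∑ i, u i = 1)
    (hclose : Real.sqrt (∑ i, (v i - lam * u i) ^ 2) ≤ ε / (4 * Real.sqrt n)) :
    (1 - ε / 2 ≤ lam ∧ lam ≤ 1 + ε / 2) ∧
      Real.sqrt (∑ i, (v i - u i) ^ 2) ≤ ε := by
  have hn : 0 < n := by
    rcases Nat.eq_zero_or_pos n with h | h
    · subst h; simp at hu1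
    · exact h
  have hsn : (1:ℝ) ≤ Real.sqrt n := by
    rw [show (1:ℝ) = Real.sqrt 1 by simp]
    exact Real.sqrt_le_sqrt (by exact_mod_cast hn)
  have hsn0 : (0:ℝ) < Real.sqrt n := lt_of_lt_of_le one_pos hsn
  set x := fun i => v i - lam * u i with hx
  -- Cauchy-Schwarz: ℓ1 ≤ √n · ℓ2
  have hcs : ∑ i, |x i| ≤ Real.sqrt n * Real.sqrt (∑ i, x i ^ 2) := by
    have := Real.sum_mul_le_sqrt_mul_sqrt Finset.univ (fun _ => (1:ℝ)) (fun i => |x i|)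
    simpa [Finset.card_univ, sq_abs] using this
  have hl1 : ∑ i, |x i| ≤ ε / 4 := by
    calc ∑ i, |x i| ≤ Real.sqrt n * Real.sqrt (∑ i, x i ^ 2) := hcs
      _ ≤ Real.sqrt n * (ε / (4 * Real.sqrt n)) := by
          exact mul_le_mul_of_nonneg_left hclose (le_of_lt hsn0)
      _ = ε / 4 := by field_simp
  -- λ close to ℓ1 norm of v
  have hlameq : lam = ∑ i, lam * u i := by
    rw [← Finset.mul_sum, hu1, mul_one]
  have hdiff : |(∑ i, |v i|) - lam| ≤ ∑ i, |x i| := by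
    rw [hlameq, ← Finset.sum_sub_distrib]
    calc |∑ i, (|v i| - lam * u i)| ≤ ∑ i, |(|v i| - lam * u i)| :=
          Finset.abs_sum_le_sum_abs _ _
      _ ≤ ∑ i, |x i| := by
          apply Finset.sum_le_sum
          intro i _
          have h1 : |lam * u i| = lam * u i := abs_of_nonneg (mul_nonneg hlam (hu0 i))
          calc |(|v i| - lam * u i)| = |(|v i| - |lam * u i|)| := by rw [h1]
            _ ≤ |v i - lam * u i| := abs_abs_sub_abs_le_abs_sub _ _
  have hdiff' := abs_le.mp (hdiff.trans hl1)
  have hlam1 : 1 - ε / 2 ≤ lam := by linarith [hdiff'.2]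
  have hlam2 : lam ≤ 1 + ε / 2 := by linarith [hdiff'.1]
  refine ⟨⟨hlam1, hlam2⟩, ?_⟩
  -- Second part via Euclidean space
  let e : (Fin n → ℝ) → EuclideanSpace ℝ (Fin n) := (WithLp.equiv 2 (Fin n → ℝ)).symm
  have hnorm : ∀ w : Fin n → ℝ, ‖e w‖ = Real.sqrt (∑ i, w i ^ 2) := by
    intro w
    rw [EuclideanSpace.norm_eq]
    congr 1
    apply Finset.sum_congr rfl
    intro i _
    simp [e, sq_abs]
  have hsub : e v - e u = e (fun i => v i - u i) := rfl
  have hsub2 : e v - lam • e u = e x := rfl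
  have hu_norm : ‖e u‖ ≤ 1 := by
    rw [hnorm]
    rw [show (1:ℝ) = Real.sqrt 1 by simp]
    apply Real.sqrt_le_sqrt
    calc ∑ i, u i ^ 2 ≤ ∑ i, u i := by
          apply Finset.sum_le_sum
          intro i _
          have hui : u i ≤ 1 := by
            rw [← hu1]
            exact Finset.single_le_sum (fun j _ => hu0 j) (Finset.mem_univ i)
          nlinarith [hu0 i]
      _ = 1 := hu1
  have hclose' : ‖e v - lam • e u‖ ≤ ε / 4 := by
    rw [hsub2, hnorm]
    calc Real.sqrt (∑ i, x i ^ 2) ≤ ε / (4 * Real.sqrt n) := hclose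
      _ ≤ ε / 4 := by
          apply div_le_div_of_nonneg_left (le_of_lt hε) (by norm_num)
          nlinarith
  have htri : ‖e v - e u‖ ≤ ‖e v - lam • e u‖ + ‖lam • e u - e u‖ :=
    norm_sub_le_norm_sub_add_norm_sub _ _ _
  have hsecond : ‖lam • e u - e u‖ ≤ ε / 2 := by
    have : lam • e u - e u = (lam - 1) • e u := by rw [sub_smul, one_smul]
    rw [this, norm_smul]
    have h1 : ‖lam - 1‖ ≤ ε / 2 := by
      rw [Real.norm_eq_abs, abs_le]; constructor <;> linarith
    calc ‖lam - 1‖ * ‖e u‖ ≤ (ε / 2) * 1 :=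
          mul_le_mul h1 hu_norm (norm_nonneg _) (by linarith)
      _ = ε / 2 := mul_one _
  have : ‖e v - e u‖ ≤ ε := by
    calc ‖e v - e u‖ ≤ ‖e v - lam • e u‖ + ‖lam • e u - e u‖ := htri
      _ ≤ ε / 4 + ε / 2 := add_le_add hclose' hsecond
      _ ≤ ε := by linarith
  rw [hsub, hnorm] at this
  exact this
end

section
/- Existence of a simultaneously non-orthogonal direction: Let u_1, …, u_t ∈ ℝ^d satisfy ‖u_i‖₂ ≥ ε > 0 for all i ∈ [t]. Then there exists a unit vector w ∈ ℝ^d such that |⟨u_i, w⟩| > ε/(20·d·t) for all i ∈ [t]. -/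
open MeasureTheory Set

lemma line_measure (a c δ : ℝ) (ha : a ≠ 0) (hδ : 0 ≤ δ) :
    volume {x : ℝ | |a * x + c| ≤ δ} ≤ ENNReal.ofReal (2 * δ / |a|) := by
  have hset : {x : ℝ | |a * x + c| ≤ δ} = (fun x => a * x + c) ⁻¹' Set.Icc (-δ) δ := by
    ext x; simp [abs_le]
  rw [hset]
  rcases lt_or_gt_of_ne ha with hneg | hpos
  · have : (fun x => a * x + c) ⁻¹' Set.Icc (-δ) δ = Set.Icc ((δ - c)/a) ((-δ - c)/a) := by
      ext x
      simp only [Set.mem_preimage, Set.mem_Icc]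
      rw [div_le_iff_of_neg hneg, le_div_iff_of_neg hneg]
      constructor <;> intro h <;> constructor <;> linarith [h.1, h.2]
    rw [this, Real.volume_Icc]
    apply ENNReal.ofReal_le_ofReal
    rw [abs_of_neg hneg]
    rw [div_sub_div_same]
    have h2 : (-δ - c - (δ - c)) / a = 2 * δ / -a := by
      rw [div_eq_div_iff ha (by linarith : (-a) ≠ 0)]; ring
    rw [h2]
  · have : (fun x => a * x + c) ⁻¹' Set.Icc (-δ) δ = Set.Icc ((-δ - c)/a) ((δ - c)/a) := by
      ext x
      simp only [Set.mem_preimage, Set.mem_Icc]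
      rw [div_le_iff₀ hpos, le_div_iff₀ hpos]
      constructor <;> intro h <;> constructor <;> linarith [h.1, h.2]
    rw [this, Real.volume_Icc]
    apply ENNReal.ofReal_le_ofReal
    rw [abs_of_pos hpos]
    rw [div_sub_div_same, div_le_div_iff₀ hpos hpos] <;> nlinarith

lemma slab_measure {n : ℕ} (a : Fin (n+1) → ℝ) (j0 : Fin (n+1)) (ha : a j0 ≠ 0)
    (δ : ℝ) (hδ : 0 ≤ δ) :
    volume {v : Fin (n+1) → ℝ | (∀ j, v j ∈ Set.Icc (-1:ℝ) 1) ∧ |∑ j, a j * v j| ≤ δ}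
      ≤ ENNReal.ofReal (2 * δ / |a j0|) * (ENNReal.ofReal 2) ^ n := by
  set e := MeasurableEquiv.piFinSuccAbove (fun _ : Fin (n+1) => ℝ) j0 with he
  have hmp := MeasureTheory.volume_preserving_piFinSuccAbove (fun _ : Fin (n+1) => ℝ) j0
  set S : Set (ℝ × (Fin n → ℝ)) :=
    (Prod.fst ⁻¹' Set.Icc (-1:ℝ) 1) ∩
    (Prod.snd ⁻¹' Set.univ.pi fun _ : Fin n => Set.Icc (-1:ℝ) 1) ∩
    ((fun p : ℝ × (Fin n → ℝ) => a j0 * p.1 + ∑ k, a (j0.succAbove k) * p.2 k) ⁻¹'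
      Set.Icc (-δ) δ) with hSdef
  have hS : MeasurableSet S := by
    refine (((measurable_fst (measurableSet_Icc)).inter
      (measurable_snd (MeasurableSet.univ_pi fun _ => measurableSet_Icc))).inter ?_)
    exact (by fun_prop : Measurable fun p : ℝ × (Fin n → ℝ) =>
      a j0 * p.1 + ∑ k, a (j0.succAbove k) * p.2 k) measurableSet_Icc
  have hpre : {v : Fin (n+1) → ℝ | (∀ j, v j ∈ Set.Icc (-1:ℝ) 1) ∧ |∑ j, a j * v j| ≤ δ}
      = e ⁻¹' S := by
    ext v
    have hsum : ∑ j, a j * v j = a j0 * v j0 + ∑ k, a (j0.succAbove k) * v (j0.succAbove k) :=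
      Fin.sum_univ_succAbove (fun j => a j * v j) j0
    simp only [Set.mem_setOf_eq, Set.mem_preimage, hSdef, Set.mem_inter_iff, Set.mem_pi,
      Set.mem_univ, true_implies, Set.mem_Icc, he, MeasurableEquiv.piFinSuccAbove_apply,
      Fin.removeNth, abs_le, hsum]
    rw [Fin.forall_iff_succAbove j0]
    simp [Set.mem_Icc]
    tauto
  rw [hpre, hmp.measure_preimage hS.nullMeasurableSet]
  rw [MeasureTheory.Measure.volume_eq_prod, MeasureTheory.Measure.prod_apply_symm hS]
  have hbound : ∀ y : Fin n → ℝ, volume ((fun x => (x, y)) ⁻¹' S) ≤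
      Set.indicator (Set.univ.pi fun _ : Fin n => Set.Icc (-1:ℝ) 1)
        (fun _ => ENNReal.ofReal (2 * δ / |a j0|)) y := by
    intro y
    by_cases hy : y ∈ Set.univ.pi fun _ : Fin n => Set.Icc (-1:ℝ) 1
    · rw [Set.indicator_of_mem hy]
      refine le_trans (measure_mono ?_) (line_measure (a j0) (∑ k, a (j0.succAbove k) * y k) δ ha hδ)
      intro x hx
      simp only [hSdef, Set.mem_preimage, Set.mem_inter_iff, Set.mem_Icc] at hx
      simp only [Set.mem_setOf_eq, abs_le]
      exact hx.2
    · rw [Set.indicator_of_notMem hy]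
      have hempty : ((fun x => (x, y)) ⁻¹' S) = ∅ := by
        ext x
        simp only [hSdef, Set.mem_preimage, Set.mem_inter_iff, Set.mem_empty_iff_false, iff_false]
        intro h
        exact hy h.1.2
      rw [hempty]
      simp
  refine le_trans (MeasureTheory.lintegral_mono hbound) ?_
  rw [MeasureTheory.lintegral_indicator_const (MeasurableSet.univ_pi fun _ => measurableSet_Icc)]
  rw [MeasureTheory.volume_pi_pi]
  simp [Real.volume_Icc]
  norm_num


/-- **Existence of a simultaneously non-orthogonal direction.** -/
theorem simultaneously_nonorthogonal_direction
    (d t : ℕ) (hd : 0 < d) (ε : ℝ) (hε : 0 < ε)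
    (u : Fin t → Fin d → ℝ)
    (hu : ∀ i, ε ≤ Real.sqrt (∑ j, (u i j) ^ 2)) :
    ∃ w : Fin d → ℝ, Real.sqrt (∑ j, (w j) ^ 2) = 1 ∧
      ∀ i, ε / (20 * (d : ℝ) * (t : ℝ)) < |∑ j, u i j * w j| := by
  by_cases ht : t = 0
  · subst ht
    refine ⟨fun j => if j = ⟨0, hd⟩ then 1 else 0, ?_, fun i => i.elim0⟩
    have : ∑ j : Fin d, (if j = (⟨0, hd⟩ : Fin d) then (1:ℝ) else 0) ^ 2 = 1 := by
      simp [apply_ite (· ^ 2)]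
    rw [this, Real.sqrt_one]
  · have ht1 : 0 < t := Nat.pos_of_ne_zero ht
    obtain ⟨n, rfl⟩ := Nat.exists_eq_succ_of_ne_zero hd.ne'
    have htR : (0:ℝ) < t := by exact_mod_cast ht1
    set D : ℝ := Real.sqrt (n+1) with hD
    have hdR : (0:ℝ) < n + 1 := by positivity
    have hDpos : 0 < D := Real.sqrt_pos.mpr hdR
    have hDsq : D * D = n + 1 := Real.mul_self_sqrt hdR.le
    -- each u i has a large coordinate
    have hmax : ∀ i, ε / D ≤ |u i (Finset.exists_max_image Finset.univ
        (fun j => |u i j|) Finset.univ_nonempty).choose| := by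
      intro i
      obtain ⟨hmem, hj0⟩ := (Finset.exists_max_image Finset.univ
        (fun j => |u i j|) Finset.univ_nonempty).choose_spec
      set j0 := (Finset.exists_max_image Finset.univ
        (fun j => |u i j|) Finset.univ_nonempty).choose
      have hsum : ∑ j, u i j ^ 2 ≤ (n+1) * |u i j0| ^ 2 := by
        calc ∑ j, u i j ^ 2 ≤ ∑ _j : Fin (n+1), |u i j0| ^ 2 :=
              Finset.sum_le_sum fun j _ => by
                rw [← sq_abs (u i j)]
                exact pow_le_pow_left₀ (abs_nonneg _) (hj0 j (Finset.mem_univ j)) 2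
          _ = (n+1) * |u i j0| ^ 2 := by
              simp [Finset.sum_const, Finset.card_univ, nsmul_eq_mul]
      have h1 : ε ≤ Real.sqrt ((n+1) * |u i j0| ^ 2) :=
        (hu i).trans (Real.sqrt_le_sqrt hsum)
      rw [Real.sqrt_mul hdR.le, Real.sqrt_sq_eq_abs, abs_abs] at h1
      rw [div_le_iff₀' hDpos]
      exact h1
    set j0 : Fin t → Fin (n+1) := fun i => (Finset.exists_max_image Finset.univ
        (fun j => |u i j|) Finset.univ_nonempty).choose with hj0def
    have hj0 : ∀ i, ε / D ≤ |u i (j0 i)| := hmax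
    have hja : ∀ i, u i (j0 i) ≠ 0 := by
      intro i h
      have := hj0 i
      rw [h, abs_zero] at this
      nlinarith [div_pos hε hDpos]
    set δ : ℝ := ε / (2 * t * D) with hδdef
    have hδpos : 0 < δ := by positivity
    set Bad : Fin t → Set (Fin (n+1) → ℝ) := fun i =>
      {v | (∀ j, v j ∈ Set.Icc (-1:ℝ) 1) ∧ |∑ j, u i j * v j| ≤ δ} with hBaddef
    have hBadvol : ∀ i, volume (Bad i) ≤ ENNReal.ofReal (1/t) * (ENNReal.ofReal 2) ^ n := by
      intro i
      refine le_trans (slab_measure (u i) (j0 i) (hja i) δ hδpos.le) ?_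
      refine mul_le_mul_left (ENNReal.ofReal_le_ofReal ?_) _
      have h1 : 2 * δ / |u i (j0 i)| ≤ 2 * δ / (ε / D) :=
        div_le_div_of_nonneg_left (by positivity) (by positivity) (hj0 i)
      refine h1.trans (le_of_eq ?_)
      rw [hδdef]
      field_simp
    set box : Set (Fin (n+1) → ℝ) := Set.univ.pi fun _ => Set.Icc (-1:ℝ) 1 with hboxdef
    have hboxvol : volume box = ENNReal.ofReal 2 * (ENNReal.ofReal 2) ^ n := by
      rw [hboxdef, volume_pi_pi]
      simp [Real.volume_Icc]
      rw [← pow_succ']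
      norm_num
    have hunion : volume (⋃ i, Bad i) < volume box := by
      calc volume (⋃ i, Bad i) ≤ ∑ i, volume (Bad i) := measure_iUnion_fintype_le _ _
        _ ≤ ∑ _i : Fin t, ENNReal.ofReal (1/t) * (ENNReal.ofReal 2) ^ n :=
            Finset.sum_le_sum fun i _ => hBadvol i
        _ = (t : ENNReal) * ENNReal.ofReal (1/t) * (ENNReal.ofReal 2) ^ n := by
            rw [Finset.sum_const, Finset.card_univ, Fintype.card_fin, nsmul_eq_mul, mul_assoc]
        _ = ENNReal.ofReal 1 * (ENNReal.ofReal 2) ^ n := by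
            congr 1
            rw [← ENNReal.ofReal_natCast, ← ENNReal.ofReal_mul (by positivity)]
            congr 1
            field_simp
        _ < ENNReal.ofReal 2 * (ENNReal.ofReal 2) ^ n := by
            refine (ENNReal.mul_lt_mul_iff_left (by positivity) (by simp [ENNReal.pow_ne_top, ENNReal.ofReal_ne_top])).mpr ?_
            exact ENNReal.ofReal_lt_ofReal_iff_of_nonneg (by norm_num) |>.mpr (by norm_num)
        _ = volume box := hboxvol.symm
    have hne : (box \ ⋃ i, Bad i).Nonempty := by
      rw [Set.nonempty_iff_ne_empty]
      intro h
      rw [Set.diff_eq_empty] at h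
      exact absurd (measure_mono h) (not_le.mpr hunion)
    obtain ⟨v, hvbox, hvbad⟩ := hne
    simp only [Set.mem_iUnion, not_exists] at hvbad
    have hvbox' : ∀ j, v j ∈ Set.Icc (-1:ℝ) 1 := fun j => hvbox j (Set.mem_univ j)
    have hlarge : ∀ i, δ < |∑ j, u i j * v j| := by
      intro i
      by_contra h
      push_neg at h
      exact hvbad i ⟨hvbox', h⟩
    set N : ℝ := Real.sqrt (∑ j, v j ^ 2) with hNdef
    have hsumnn : (0:ℝ) ≤ ∑ j, v j ^ 2 := Finset.sum_nonneg fun j _ => sq_nonneg _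
    have hNpos : 0 < N := by
      rw [hNdef, Real.sqrt_pos]
      rcases hsumnn.lt_or_eq with h | h
      · exact h
      · exfalso
        have hz : ∀ j, v j = 0 := by
          intro j
          have := Finset.sum_eq_zero_iff_of_nonneg (fun j _ => sq_nonneg (v j)) |>.mp h.symm
          exact pow_eq_zero_iff (by norm_num) |>.mp (this j (Finset.mem_univ j))
        have := hlarge ⟨0, ht1⟩
        simp [hz] at this
        linarith
    have hNle : N ≤ D := by
      rw [hNdef, hD]
      apply Real.sqrt_le_sqrt
      calc ∑ j, v j ^ 2 ≤ ∑ _j : Fin (n+1), (1:ℝ) := Finset.sum_le_sum fun j _ => by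
            have := hvbox' j
            rw [Set.mem_Icc] at this
            nlinarith [this.1, this.2]
        _ = n + 1 := by simp
    refine ⟨fun j => v j / N, ?_, ?_⟩
    · have h1 : ∑ j, (v j / N) ^ 2 = (∑ j, v j ^ 2) / N ^ 2 := by
        rw [Finset.sum_div]
        exact Finset.sum_congr rfl fun j _ => div_pow _ _ _
      have h2 : ∑ j, v j ^ 2 = N ^ 2 := (Real.sq_sqrt hsumnn).symm
      rw [h1, h2, div_self (by positivity), Real.sqrt_one]
    · intro i
      have h2 : ∑ j, u i j * (v j / N) = (∑ j, u i j * v j) / N := by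
        rw [Finset.sum_div]
        exact Finset.sum_congr rfl fun j _ => (mul_div_assoc _ _ _).symm
      rw [h2, abs_div, abs_of_pos hNpos]
      have hstep : δ / D ≤ |∑ j, u i j * v j| / N :=
        div_le_div₀ (abs_nonneg _) (hlarge i).le hNpos hNle
      refine lt_of_lt_of_le ?_ hstep
      have hδD : δ / D = ε / (2 * t * (n+1)) := by
        rw [hδdef, div_div]
        congr 1
        rw [mul_assoc, hDsq]
      rw [hδD]
      have : ((n:ℝ) + 1) = ((n+1 : ℕ) : ℝ) := by push_cast; ring
      apply div_lt_div_of_pos_left hε (by positivity)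
      push_cast
      nlinarith
end

section
/- Projecting the components of a low-rank decomposition loses at most 3ε (hybrid argument): Let a_i ∈ ℝ^m, b_i ∈ ℝⁿ, c_i ∈ ℝ^p for i ∈ [R], and set T₀ = Σ_{i=1}^R a_i ⊗ b_i ⊗ c_i. Let Π_A, Π_B, Π_C be orthogonal projections onto subspaces of ℝ^m, ℝⁿ, ℝ^p respectively, such that the three unfoldings of T₀ satisfy ‖M_A − Π_A M_A‖_F ≤ ε, ‖M_B − Π_B M_B‖_F ≤ ε, and ‖M_C − Π_C M_C‖_F ≤ ε, where M_A (resp. M_B, M_C) is the mode-1 (resp. mode-2, mode-3) unfolding of T₀. Setting ã_i = Π_A a_i, b̃_i = Π_B b_i, c̃_i = Π_C c_i, one has ‖Σ_{i=1}^R a_i ⊗ b_i ⊗ c_i − Σ_{i=1}^R ã_i ⊗ b̃_i ⊗ c̃_i‖_F ≤ 3ε. -/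
/-- Mode-1 fiber of the rank-`R` tensor `∑ r, a r ⊗ b r ⊗ c r`, as a Euclidean vector. -/
noncomputable def fiberA {m n p R : ℕ} (a : Fin R → EuclideanSpace ℝ (Fin m))
    (b : Fin R → EuclideanSpace ℝ (Fin n)) (c : Fin R → EuclideanSpace ℝ (Fin p))
    (j : Fin n) (k : Fin p) : EuclideanSpace ℝ (Fin m) :=
  WithLp.toLp 2 (fun i => ∑ r, a r i * b r j * c r k)

/-- Mode-2 fiber of the rank-`R` tensor `∑ r, a r ⊗ b r ⊗ c r`, as a Euclidean vector. -/
noncomputable def fiberB {m n p R : ℕ} (a : Fin R → EuclideanSpace ℝ (Fin m))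
    (b : Fin R → EuclideanSpace ℝ (Fin n)) (c : Fin R → EuclideanSpace ℝ (Fin p))
    (i : Fin m) (k : Fin p) : EuclideanSpace ℝ (Fin n) :=
  WithLp.toLp 2 (fun j => ∑ r, a r i * b r j * c r k)

/-- Mode-3 fiber of the rank-`R` tensor `∑ r, a r ⊗ b r ⊗ c r`, as a Euclidean vector. -/
noncomputable def fiberC {m n p R : ℕ} (a : Fin R → EuclideanSpace ℝ (Fin m))
    (b : Fin R → EuclideanSpace ℝ (Fin n)) (c : Fin R → EuclideanSpace ℝ (Fin p))
    (i : Fin m) (j : Fin n) : EuclideanSpace ℝ (Fin p) :=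
  WithLp.toLp 2 (fun k => ∑ r, a r i * b r j * c r k)

section Aux

variable {N R : ℕ}

lemma epi_sum_apply (f : Fin R → EuclideanSpace ℝ (Fin N)) (i : Fin N) :
    (∑ r, f r) i = ∑ r, f r i :=
  by rw [WithLp.ofLp_sum, Finset.sum_apply]

lemma esum_sq (v : EuclideanSpace ℝ (Fin N)) : ∑ i, (v i)^2 = ‖v‖^2 := by
  rw [EuclideanSpace.norm_eq, Real.sq_sqrt (by positivity)]
  simp [Real.norm_eq_abs, sq_abs]

lemma proj_sum (V : Submodule ℝ (EuclideanSpace ℝ (Fin N)))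
    (a : Fin R → EuclideanSpace ℝ (Fin N)) (q : Fin R → ℝ) (i : Fin N) :
    (V.orthogonalProjectionOnto (WithLp.toLp 2 (fun i => ∑ r, a r i * q r) : EuclideanSpace ℝ (Fin N)) :
      EuclideanSpace ℝ (Fin N)) i
      = ∑ r, (V.orthogonalProjectionOnto (a r) : EuclideanSpace ℝ (Fin N)) i * q r := by
  have h : (WithLp.toLp 2 (fun i => ∑ r, a r i * q r) : EuclideanSpace ℝ (Fin N)) = ∑ r, q r • a r := by
    ext j
    rw [epi_sum_apply]
    simp [mul_comm]
  rw [h, map_sum]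
  push_cast
  rw [epi_sum_apply]
  simp [mul_comm]

lemma sum_sq_proj_le (V : Submodule ℝ (EuclideanSpace ℝ (Fin N))) (x : EuclideanSpace ℝ (Fin N)) :
    ∑ i, ((V.orthogonalProjectionOnto x : EuclideanSpace ℝ (Fin N)) i)^2 ≤ ∑ i, (x i)^2 := by
  rw [esum_sq, esum_sq]
  have h1 : ‖(V.orthogonalProjectionOnto x : EuclideanSpace ℝ (Fin N))‖ ≤ ‖x‖ := by
    calc ‖(V.orthogonalProjectionOnto x : EuclideanSpace ℝ (Fin N))‖
        = ‖V.orthogonalProjectionOnto x‖ := rfl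
      _ ≤ ‖V.orthogonalProjectionOnto‖ * ‖x‖ := (V.orthogonalProjectionOnto).le_opNorm x
      _ ≤ 1 * ‖x‖ := by gcongr; exact Submodule.orthogonalProjectionOnto_norm_le V
      _ = ‖x‖ := one_mul _
  exact pow_le_pow_left₀ (norm_nonneg _) h1 2

/-- Applying an orthogonal projection slotwise contracts the slice Frobenius mass. -/
lemma contract_sum (V : Submodule ℝ (EuclideanSpace ℝ (Fin N)))
    (a : Fin R → EuclideanSpace ℝ (Fin N)) (q : Fin R → ℝ) :
    ∑ i, (∑ r, (V.orthogonalProjectionOnto (a r) : EuclideanSpace ℝ (Fin N)) i * q r)^2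
      ≤ ∑ i, (∑ r, a r i * q r)^2 := by
  have h := sum_sq_proj_le V (WithLp.toLp 2 (fun i => ∑ r, a r i * q r) : EuclideanSpace ℝ (Fin N))
  calc ∑ i, (∑ r, (V.orthogonalProjectionOnto (a r) : EuclideanSpace ℝ (Fin N)) i * q r)^2
      = ∑ i, ((V.orthogonalProjectionOnto (WithLp.toLp 2 (fun i => ∑ r, a r i * q r) : EuclideanSpace ℝ (Fin N)) :
          EuclideanSpace ℝ (Fin N)) i)^2 := by
        exact Finset.sum_congr rfl fun i _ => by rw [proj_sum]
    _ ≤ _ := h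

/-- The slice Frobenius mass of the residual, expressed via the fiber vector. -/
lemma fiber_sub_sq (V : Submodule ℝ (EuclideanSpace ℝ (Fin N)))
    (a : Fin R → EuclideanSpace ℝ (Fin N)) (q : Fin R → ℝ)
    (v : EuclideanSpace ℝ (Fin N)) (hv : ∀ i, v i = ∑ r, a r i * q r) :
    ∑ i, (∑ r, (a r i - (V.orthogonalProjectionOnto (a r) : EuclideanSpace ℝ (Fin N)) i) * q r)^2
      = ‖v - (V.orthogonalProjectionOnto v : EuclideanSpace ℝ (Fin N))‖^2 := by
  rw [← esum_sq]
  refine Finset.sum_congr rfl fun i _ => ?_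
  have hv' : v = WithLp.toLp 2 (fun i => ∑ r, a r i * q r) := by ext i; exact hv i
  have hp : (V.orthogonalProjectionOnto v : EuclideanSpace ℝ (Fin N)) i
      = ∑ r, (V.orthogonalProjectionOnto (a r) : EuclideanSpace ℝ (Fin N)) i * q r := by
    rw [hv']
    exact proj_sum V a q i
  have hsub : (v - (V.orthogonalProjectionOnto v : EuclideanSpace ℝ (Fin N))) i
      = v i - (V.orthogonalProjectionOnto v : EuclideanSpace ℝ (Fin N)) i := rfl
  rw [hsub, hp, hv i, ← Finset.sum_sub_distrib]
  congr 1
  exact Finset.sum_congr rfl fun r _ => by ring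

lemma sum3_rot {m n p : ℕ} (f : Fin m → Fin n → Fin p → ℝ) :
    ∑ i, ∑ j, ∑ k, f i j k = ∑ j, ∑ k, ∑ i, f i j k := by
  rw [Finset.sum_comm]
  exact Finset.sum_congr rfl fun j _ => Finset.sum_comm

lemma sum3_swap23 {m n p : ℕ} (f : Fin m → Fin n → Fin p → ℝ) :
    ∑ i, ∑ j, ∑ k, f i j k = ∑ i, ∑ k, ∑ j, f i j k :=
  Finset.sum_congr rfl fun _ _ => Finset.sum_comm

lemma tnorm {m n p : ℕ} (u : EuclideanSpace ℝ (Fin m × Fin n × Fin p)) :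
    ‖u‖ = Real.sqrt (∑ i, ∑ j, ∑ k, (u (i, j, k))^2) := by
  rw [EuclideanSpace.norm_eq]
  congr 1
  rw [Fintype.sum_prod_type]
  refine Finset.sum_congr rfl fun i _ => ?_
  rw [Fintype.sum_prod_type]
  simp [Real.norm_eq_abs, sq_abs]

end Aux

/-- **Projecting the components of a low-rank decomposition loses at most `3ε`
(hybrid argument).** -/
theorem project_components_hybrid
    (m n p R : ℕ) (ε : ℝ)
    (a : Fin R → EuclideanSpace ℝ (Fin m))
    (b : Fin R → EuclideanSpace ℝ (Fin n))
    (c : Fin R → EuclideanSpace ℝ (Fin p))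
    (VA : Submodule ℝ (EuclideanSpace ℝ (Fin m)))
    (VB : Submodule ℝ (EuclideanSpace ℝ (Fin n)))
    (VC : Submodule ℝ (EuclideanSpace ℝ (Fin p)))
    (hA : Real.sqrt (∑ j, ∑ k,
      ‖fiberA a b c j k - (VA.orthogonalProjectionOnto (fiberA a b c j k) :
          EuclideanSpace ℝ (Fin m))‖ ^ 2) ≤ ε)
    (hB : Real.sqrt (∑ i, ∑ k,
      ‖fiberB a b c i k - (VB.orthogonalProjectionOnto (fiberB a b c i k) :
          EuclideanSpace ℝ (Fin n))‖ ^ 2) ≤ ε)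
    (hC : Real.sqrt (∑ i, ∑ j,
      ‖fiberC a b c i j - (VC.orthogonalProjectionOnto (fiberC a b c i j) :
          EuclideanSpace ℝ (Fin p))‖ ^ 2) ≤ ε) :
    Real.sqrt (∑ i, ∑ j, ∑ k,
        ((∑ r, a r i * b r j * c r k) -
          ∑ r, (VA.orthogonalProjectionOnto (a r) : EuclideanSpace ℝ (Fin m)) i *
            (VB.orthogonalProjectionOnto (b r) : EuclideanSpace ℝ (Fin n)) j *
            (VC.orthogonalProjectionOnto (c r) : EuclideanSpace ℝ (Fin p)) k) ^ 2)
      ≤ 3 * ε := by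
  classical
  have hε : (0:ℝ) ≤ ε := le_trans (Real.sqrt_nonneg _) hA
  set Pa : Fin R → Fin m → ℝ :=
    fun r => (VA.orthogonalProjectionOnto (a r) : EuclideanSpace ℝ (Fin m)) with hPa
  set Pb : Fin R → Fin n → ℝ :=
    fun r => (VB.orthogonalProjectionOnto (b r) : EuclideanSpace ℝ (Fin n)) with hPb
  set Pc : Fin R → Fin p → ℝ :=
    fun r => (VC.orthogonalProjectionOnto (c r) : EuclideanSpace ℝ (Fin p)) with hPc
  set d1 : Fin m → Fin n → Fin p → ℝ :=
    fun i j k => ∑ r, (a r i - Pa r i) * (b r j * c r k) with hd1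
  set d2 : Fin m → Fin n → Fin p → ℝ :=
    fun i j k => ∑ r, Pa r i * ((b r j - Pb r j) * c r k) with hd2
  set d3 : Fin m → Fin n → Fin p → ℝ :=
    fun i j k => ∑ r, Pa r i * (Pb r j * (c r k - Pc r k)) with hd3
  have hD : ∀ (i : Fin m) (j : Fin n) (k : Fin p),
      ((∑ r, a r i * b r j * c r k) -
        ∑ r, (VA.orthogonalProjectionOnto (a r) : EuclideanSpace ℝ (Fin m)) i *
          (VB.orthogonalProjectionOnto (b r) : EuclideanSpace ℝ (Fin n)) j *
          (VC.orthogonalProjectionOnto (c r) : EuclideanSpace ℝ (Fin p)) k)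
      = d1 i j k + d2 i j k + d3 i j k := by
    intro i j k
    show ((∑ r, a r i * b r j * c r k) - ∑ r, Pa r i * Pb r j * Pc r k)
        = (∑ r, (a r i - Pa r i) * (b r j * c r k))
          + (∑ r, Pa r i * ((b r j - Pb r j) * c r k))
          + (∑ r, Pa r i * (Pb r j * (c r k - Pc r k)))
    rw [← Finset.sum_sub_distrib, ← Finset.sum_add_distrib, ← Finset.sum_add_distrib]
    exact Finset.sum_congr rfl fun r _ => by ring
  set u1 : EuclideanSpace ℝ (Fin m × Fin n × Fin p) := WithLp.toLp 2 (fun x => d1 x.1 x.2.1 x.2.2) with hu1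
  set u2 : EuclideanSpace ℝ (Fin m × Fin n × Fin p) := WithLp.toLp 2 (fun x => d2 x.1 x.2.1 x.2.2) with hu2
  set u3 : EuclideanSpace ℝ (Fin m × Fin n × Fin p) := WithLp.toLp 2 (fun x => d3 x.1 x.2.1 x.2.2) with hu3
  -- bound for u1
  have b1 : ‖u1‖ ≤ ε := by
    rw [tnorm u1]
    refine le_trans (le_of_eq ?_) hA
    congr 1
    calc ∑ i, ∑ j, ∑ k, (u1 (i, j, k))^2
        = ∑ j, ∑ k, ∑ i, (u1 (i, j, k))^2 := sum3_rot (fun i j k => (u1 (i, j, k))^2)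
      _ = ∑ j, ∑ k, ‖fiberA a b c j k - (VA.orthogonalProjectionOnto (fiberA a b c j k) :
            EuclideanSpace ℝ (Fin m))‖ ^ 2 := by
          refine Finset.sum_congr rfl fun j _ => Finset.sum_congr rfl fun k _ => ?_
          exact fiber_sub_sq VA a (fun r => b r j * c r k) (fiberA a b c j k)
            (fun i => (show fiberA a b c j k i = ∑ r, a r i * b r j * c r k from rfl).trans
              (Finset.sum_congr rfl fun r _ => mul_assoc _ _ _))
  -- bound for u2
  have b2 : ‖u2‖ ≤ ε := by
    rw [tnorm u2]
    have step1 : ∑ i, ∑ j, ∑ k, (u2 (i, j, k))^2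
        ≤ ∑ i, ∑ j, ∑ k, (∑ r, a r i * ((b r j - Pb r j) * c r k))^2 := by
      calc ∑ i, ∑ j, ∑ k, (u2 (i, j, k))^2
          = ∑ j, ∑ k, ∑ i, (u2 (i, j, k))^2 := sum3_rot (fun i j k => (u2 (i, j, k))^2)
        _ ≤ ∑ j, ∑ k, ∑ i, (∑ r, a r i * ((b r j - Pb r j) * c r k))^2 := by
            refine Finset.sum_le_sum fun j _ => Finset.sum_le_sum fun k _ => ?_
            exact contract_sum VA a (fun r => (b r j - Pb r j) * c r k)
        _ = ∑ i, ∑ j, ∑ k, (∑ r, a r i * ((b r j - Pb r j) * c r k))^2 :=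
            (sum3_rot (fun i j k => (∑ r, a r i * ((b r j - Pb r j) * c r k))^2)).symm
    have step2 : ∑ i, ∑ j, ∑ k, (∑ r, a r i * ((b r j - Pb r j) * c r k))^2 ≤ ε^2 := by
      calc ∑ i, ∑ j, ∑ k, (∑ r, a r i * ((b r j - Pb r j) * c r k))^2
          = ∑ i, ∑ k, ∑ j, (∑ r, a r i * ((b r j - Pb r j) * c r k))^2 :=
            sum3_swap23 (fun i j k => (∑ r, a r i * ((b r j - Pb r j) * c r k))^2)
        _ = ∑ i, ∑ k, ‖fiberB a b c i k - (VB.orthogonalProjectionOnto (fiberB a b c i k) :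
              EuclideanSpace ℝ (Fin n))‖ ^ 2 := by
            refine Finset.sum_congr rfl fun i _ => Finset.sum_congr rfl fun k _ => ?_
            have h := fiber_sub_sq VB b (fun r => a r i * c r k) (fiberB a b c i k)
              (fun j => (show fiberB a b c i k j = ∑ r, a r i * b r j * c r k from rfl).trans
                (Finset.sum_congr rfl fun r _ => by show a r i * b r j * c r k = _; ring))
            rw [← h]
            refine Finset.sum_congr rfl fun j _ => ?_
            congr 1
            exact Finset.sum_congr rfl fun r _ => by ring
        _ ≤ ε^2 := by
            have hnn : (0:ℝ) ≤ ∑ i, ∑ k, ‖fiberB a b c i k -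
                (VB.orthogonalProjectionOnto (fiberB a b c i k) :
                  EuclideanSpace ℝ (Fin n))‖ ^ 2 := by positivity
            calc ∑ i, ∑ k, ‖fiberB a b c i k - (VB.orthogonalProjectionOnto (fiberB a b c i k) :
                  EuclideanSpace ℝ (Fin n))‖ ^ 2
                = Real.sqrt (∑ i, ∑ k, ‖fiberB a b c i k -
                    (VB.orthogonalProjectionOnto (fiberB a b c i k) :
                      EuclideanSpace ℝ (Fin n))‖ ^ 2) ^ 2 := (Real.sq_sqrt hnn).symm
              _ ≤ ε^2 := pow_le_pow_left₀ (Real.sqrt_nonneg _) hB 2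
    calc Real.sqrt (∑ i, ∑ j, ∑ k, (u2 (i, j, k))^2)
        ≤ Real.sqrt (ε^2) := Real.sqrt_le_sqrt (step1.trans step2)
      _ = ε := Real.sqrt_sq hε
  -- bound for u3
  have b3 : ‖u3‖ ≤ ε := by
    rw [tnorm u3]
    have step1 : ∑ i, ∑ j, ∑ k, (u3 (i, j, k))^2
        ≤ ∑ i, ∑ j, ∑ k, (∑ r, a r i * (Pb r j * (c r k - Pc r k)))^2 := by
      calc ∑ i, ∑ j, ∑ k, (u3 (i, j, k))^2
          = ∑ j, ∑ k, ∑ i, (u3 (i, j, k))^2 := sum3_rot (fun i j k => (u3 (i, j, k))^2)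
        _ ≤ ∑ j, ∑ k, ∑ i, (∑ r, a r i * (Pb r j * (c r k - Pc r k)))^2 := by
            refine Finset.sum_le_sum fun j _ => Finset.sum_le_sum fun k _ => ?_
            exact contract_sum VA a (fun r => Pb r j * (c r k - Pc r k))
        _ = ∑ i, ∑ j, ∑ k, (∑ r, a r i * (Pb r j * (c r k - Pc r k)))^2 :=
            (sum3_rot (fun i j k => (∑ r, a r i * (Pb r j * (c r k - Pc r k)))^2)).symm
    have step2 : ∑ i, ∑ j, ∑ k, (∑ r, a r i * (Pb r j * (c r k - Pc r k)))^2
        ≤ ∑ i, ∑ j, ∑ k, (∑ r, a r i * (b r j * (c r k - Pc r k)))^2 := by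
      calc ∑ i, ∑ j, ∑ k, (∑ r, a r i * (Pb r j * (c r k - Pc r k)))^2
          = ∑ i, ∑ k, ∑ j, (∑ r, a r i * (Pb r j * (c r k - Pc r k)))^2 :=
            sum3_swap23 (fun i j k => (∑ r, a r i * (Pb r j * (c r k - Pc r k)))^2)
        _ ≤ ∑ i, ∑ k, ∑ j, (∑ r, a r i * (b r j * (c r k - Pc r k)))^2 := by
            refine Finset.sum_le_sum fun i _ => Finset.sum_le_sum fun k _ => ?_
            have h := contract_sum VB b (fun r => a r i * (c r k - Pc r k))
            calc ∑ j, (∑ r, a r i * (Pb r j * (c r k - Pc r k)))^2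
                = ∑ j, (∑ r, (VB.orthogonalProjectionOnto (b r) : EuclideanSpace ℝ (Fin n)) j *
                    (a r i * (c r k - Pc r k)))^2 := by
                  refine Finset.sum_congr rfl fun j _ => ?_
                  congr 1
                  exact Finset.sum_congr rfl fun r _ => by show _ = Pb r j * _; ring
              _ ≤ ∑ j, (∑ r, b r j * (a r i * (c r k - Pc r k)))^2 := h
              _ = ∑ j, (∑ r, a r i * (b r j * (c r k - Pc r k)))^2 := by
                  refine Finset.sum_congr rfl fun j _ => ?_
                  congr 1
                  exact Finset.sum_congr rfl fun r _ => by ring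
        _ = ∑ i, ∑ j, ∑ k, (∑ r, a r i * (b r j * (c r k - Pc r k)))^2 :=
            (sum3_swap23 (fun i j k => (∑ r, a r i * (b r j * (c r k - Pc r k)))^2)).symm
    have step3 : ∑ i, ∑ j, ∑ k, (∑ r, a r i * (b r j * (c r k - Pc r k)))^2 ≤ ε^2 := by
      calc ∑ i, ∑ j, ∑ k, (∑ r, a r i * (b r j * (c r k - Pc r k)))^2
          = ∑ i, ∑ j, ‖fiberC a b c i j - (VC.orthogonalProjectionOnto (fiberC a b c i j) :
              EuclideanSpace ℝ (Fin p))‖ ^ 2 := by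
            refine Finset.sum_congr rfl fun i _ => Finset.sum_congr rfl fun j _ => ?_
            have h := fiber_sub_sq VC c (fun r => a r i * b r j) (fiberC a b c i j)
              (fun k => (show fiberC a b c i j k = ∑ r, a r i * b r j * c r k from rfl).trans
                (Finset.sum_congr rfl fun r _ => by
                show a r i * b r j * c r k = _; ring))
            rw [← h]
            refine Finset.sum_congr rfl fun k _ => ?_
            congr 1
            exact Finset.sum_congr rfl fun r _ => by ring
        _ ≤ ε^2 := by
            have hnn : (0:ℝ) ≤ ∑ i, ∑ j, ‖fiberC a b c i j -
                (VC.orthogonalProjectionOnto (fiberC a b c i j) :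
                  EuclideanSpace ℝ (Fin p))‖ ^ 2 := by positivity
            calc ∑ i, ∑ j, ‖fiberC a b c i j - (VC.orthogonalProjectionOnto (fiberC a b c i j) :
                  EuclideanSpace ℝ (Fin p))‖ ^ 2
                = Real.sqrt (∑ i, ∑ j, ‖fiberC a b c i j -
                    (VC.orthogonalProjectionOnto (fiberC a b c i j) :
                      EuclideanSpace ℝ (Fin p))‖ ^ 2) ^ 2 := (Real.sq_sqrt hnn).symm
              _ ≤ ε^2 := pow_le_pow_left₀ (Real.sqrt_nonneg _) hC 2
    calc Real.sqrt (∑ i, ∑ j, ∑ k, (u3 (i, j, k))^2)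
        ≤ Real.sqrt (ε^2) := Real.sqrt_le_sqrt ((step1.trans step2).trans step3)
      _ = ε := Real.sqrt_sq hε
  -- combine
  have final : ‖u1 + u2 + u3‖ ≤ 3 * ε := by
    calc ‖u1 + u2 + u3‖ ≤ ‖u1‖ + ‖u2‖ + ‖u3‖ := norm_add₃_le
      _ ≤ ε + ε + ε := by gcongr
      _ = 3 * ε := by ring
  refine le_trans (le_of_eq ?_) final
  rw [tnorm (u1 + u2 + u3)]
  congr 1
  refine Finset.sum_congr rfl fun i _ => Finset.sum_congr rfl fun j _ =>
    Finset.sum_congr rfl fun k _ => ?_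
  rw [hD i j k]
  rfl
end
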